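/- Let m, n be positive natural numbers. Let ρ be a real positive semidefinite matrix indexed by (Fin m × Fin n) with trace 1, and let Ψ : Fin m × Fin n → ℝ be a unit vector (Σ_p (Ψ p)^2 = 1). Suppose that for every symmetric matrix a : Matrix (Fin m) (Fin m) ℝ and every symmetric matrix b : Matrix (Fin n) (Fin n) ℝ one has trace ((ρ − vecMulVec Ψ Ψ) * (a ⊗ₖ b)) = 0, where ⊗ₖ denotes the Kronecker product (indexed by Fin m × Fin n) and vecMulVec Ψ Ψ is the rank-one matrix Ψ Ψᵀ. Then ρ = vecMulVec Ψ Ψ. -/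

import Mathlib

open Matrix in
lemma stdBasisMatrix_transpose' {m n : ℕ} (i : Fin m) (k : Fin n) :
    (Matrix.single i k (1:ℝ))ᵀ = Matrix.single k i 1 := by
  ext a b
  simp only [Matrix.transpose_apply, Matrix.single, Matrix.of_apply]
  by_cases h1 : i = b <;> by_cases h2 : k = a <;> simp [h1, h2]

lemma sym_pair_isSymm {m : ℕ} (i k : Fin m) :
    (Matrix.single i k (1:ℝ) + Matrix.single k i 1).IsSymm := by
  unfold Matrix.IsSymm
  rw [Matrix.transpose_add, stdBasisMatrix_transpose', stdBasisMatrix_transpose', add_comm]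

lemma trace_prod_sym {m n : ℕ} (M : Matrix (Fin m × Fin n) (Fin m × Fin n) ℝ)
    (i k : Fin m) (j l : Fin n) :
    (M * Matrix.kroneckerMap (· * ·)
        (Matrix.single i k (1:ℝ) + Matrix.single k i 1)
        (Matrix.single j l (1:ℝ) + Matrix.single l j 1)).trace
      = M (k,l) (i,j) + M (k,j) (i,l) + M (i,l) (k,j) + M (i,j) (k,l) := by
  rw [Matrix.trace]
  simp only [Matrix.diag_apply, Matrix.mul_apply, Matrix.kroneckerMap_apply,
    Matrix.single, Matrix.of_apply, Matrix.add_apply, Fintype.sum_prod_type]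
  simp [Finset.mul_sum, ite_and, mul_ite, add_mul, mul_add, Finset.sum_add_distrib,
    Finset.sum_ite_eq, Finset.sum_ite_eq']
  ring

/-- Real quantum theory enjoys local discriminability on pure states: a density
matrix `ρ` on `ℝ^m ⊗ ℝ^n` giving the same expectations as the pure state `Ψ Ψᵀ`
on all symmetric product observables `a ⊗ₖ b` equals `Ψ Ψᵀ`. -/
theorem real_quantum_local_discriminability_pure
    (m n : ℕ) (hm : 0 < m) (hn : 0 < n)
    (ρ : Matrix (Fin m × Fin n) (Fin m × Fin n) ℝ)
    (hρ : ρ.PosSemidef) (htr : ρ.trace = 1)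
    (Ψ : Fin m × Fin n → ℝ) (hΨ : ∑ p, (Ψ p) ^ 2 = 1)
    (h : ∀ a : Matrix (Fin m) (Fin m) ℝ, a.IsSymm →
      ∀ b : Matrix (Fin n) (Fin n) ℝ, b.IsSymm →
        ((ρ - Matrix.vecMulVec Ψ Ψ) * Matrix.kroneckerMap (· * ·) a b).trace = 0) :
    ρ = Matrix.vecMulVec Ψ Ψ := by
  have hDapp : ∀ p q, (ρ - Matrix.vecMulVec Ψ Ψ) p q = ρ p q - Ψ p * Ψ q := by
    intro p q; simp [Matrix.sub_apply, Matrix.vecMulVec_apply]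
  have hρsym : ∀ p q, ρ p q = ρ q p := by
    intro p q
    have := hρ.1.apply p q
    simpa using this.symm
  -- four-term relation from the hypothesis
  have hD4 : ∀ (i k : Fin m) (j l : Fin n),
      (ρ (k,l) (i,j) - Ψ (k,l) * Ψ (i,j)) + (ρ (k,j) (i,l) - Ψ (k,j) * Ψ (i,l))
        + (ρ (i,l) (k,j) - Ψ (i,l) * Ψ (k,j)) + (ρ (i,j) (k,l) - Ψ (i,j) * Ψ (k,l)) = 0 := by
    intro i k j l
    have := h _ (sym_pair_isSymm i k) _ (sym_pair_isSymm j l)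
    rw [trace_prod_sym] at this
    rw [hDapp, hDapp, hDapp, hDapp] at this
    exact this
  have hrel : ∀ (i k : Fin m) (j l : Fin n),
      ρ (i,j) (k,l) - Ψ (i,j) * Ψ (k,l) = -(ρ (i,l) (k,j) - Ψ (i,l) * Ψ (k,j)) := by
    intro i k j l
    have h4 := hD4 i k j l
    have s1 : ρ (k,l) (i,j) = ρ (i,j) (k,l) := hρsym _ _
    have s2 : ρ (k,j) (i,l) = ρ (i,l) (k,j) := hρsym _ _
    nlinarith [h4, s1, s2]
  have hzero1 : ∀ (i : Fin m) (j l : Fin n), ρ (i,j) (i,l) = Ψ (i,j) * Ψ (i,l) := by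
    intro i j l
    have h1 := hrel i i j l
    have s1 : ρ (i,l) (i,j) = ρ (i,j) (i,l) := hρsym _ _
    nlinarith [h1, s1]
  have hzero2 : ∀ (i k : Fin m) (j : Fin n), ρ (i,j) (k,j) = Ψ (i,j) * Ψ (k,j) := by
    intro i k j
    have h1 := hrel i k j j
    nlinarith [h1]
  -- main claim : all entries of ρ agree with the pure state
  have key : ∀ (i k : Fin m) (j l : Fin n), ρ (i,j) (k,l) = Ψ (i,j) * Ψ (k,l) := by
    intro i k j l
    by_cases hik : i = k
    · subst hik; exact hzero1 i j l
    by_cases hjl : j = l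
    · subst hjl; exact hzero2 i k j
    obtain ⟨a, ha⟩ : ∃ x, x = Ψ (i,j) := ⟨_, rfl⟩
    obtain ⟨b, hb⟩ : ∃ x, x = Ψ (i,l) := ⟨_, rfl⟩
    obtain ⟨c, hc⟩ : ∃ x, x = Ψ (k,j) := ⟨_, rfl⟩
    obtain ⟨e, he⟩ : ∃ x, x = Ψ (k,l) := ⟨_, rfl⟩
    obtain ⟨d, hd⟩ : ∃ x, x = ρ (i,j) (k,l) - Ψ (i,j) * Ψ (k,l) := ⟨_, rfl⟩
    have e11 : ρ (i,j) (i,j) = a*a := by rw [ha]; exact hzero1 i j j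
    have e22 : ρ (i,l) (i,l) = b*b := by rw [hb]; exact hzero1 i l l
    have e33 : ρ (k,j) (k,j) = c*c := by rw [hc]; exact hzero1 k j j
    have e44 : ρ (k,l) (k,l) = e*e := by rw [he]; exact hzero1 k l l
    have e12 : ρ (i,j) (i,l) = a*b := by rw [ha, hb]; exact hzero1 i j l
    have e13 : ρ (i,j) (k,j) = a*c := by rw [ha, hc]; exact hzero2 i k j
    have e24 : ρ (i,l) (k,l) = b*e := by rw [hb, he]; exact hzero2 i k l
    have e34 : ρ (k,j) (k,l) = c*e := by rw [hc, he]; exact hzero1 k j l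
    have e14 : ρ (i,j) (k,l) = a*e + d := by rw [ha, he, hd]; ring
    have e23 : ρ (i,l) (k,j) = b*c - d := by
      have h1 := hrel i k j l
      rw [hb, hc]
      rw [hd]
      linarith [h1]
    have e21 : ρ (i,l) (i,j) = a*b := by rw [hρsym]; exact e12
    have e31 : ρ (k,j) (i,j) = a*c := by rw [hρsym]; exact e13
    have e42 : ρ (k,l) (i,l) = b*e := by rw [hρsym]; exact e24
    have e43 : ρ (k,l) (k,j) = c*e := by rw [hρsym]; exact e34
    have e41 : ρ (k,l) (i,j) = a*e + d := by rw [hρsym]; exact e14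
    have e32 : ρ (k,j) (i,l) = b*c - d := by rw [hρsym]; exact e23
    -- quadratic form nonnegativity on the 4-dimensional coordinate subspace
    have hq : ∀ x1 x2 x3 x4 : ℝ,
        0 ≤ (a*x1 + b*x2 + c*x3 + e*x4)^2 + 2*d*(x1*x4 - x2*x3) := by
      intro x1 x2 x3 x4
      have hS := (hρ.submatrix ![((i,j) : Fin m × Fin n),(i,l),(k,j),(k,l)]).dotProduct_mulVec_nonneg ![x1,x2,x3,x4]
      simp only [dotProduct, Matrix.mulVec, Fin.sum_univ_four, Matrix.submatrix_apply,
        star_trivial, Matrix.cons_val_zero, Matrix.cons_val_one, Matrix.head_cons,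
        Matrix.cons_val_two, Matrix.tail_cons, Matrix.cons_val_three, Matrix.head_fin_const,
        Pi.star_apply] at hS
      rw [e11, e22, e33, e44, e12, e13, e24, e34, e14, e23, e21, e31, e42, e43, e41, e32] at hS
      linarith [hS]
    -- tests forcing d = 0
    have h1 := hq (-b) a e (-c)
    have h2 := hq (-b) a (-e) c
    have h3 : discrim (a*a) (2*(a*e+d)) (e*e) ≤ 0 := by
      apply discrim_le_zero
      intro t
      linarith [hq t 0 0 1]
    have h4 : discrim (b*b) (2*(b*c-d)) (c*c) ≤ 0 := by
      apply discrim_le_zero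
      intro t
      linarith [hq 0 t 1 0]
    rw [discrim] at h3 h4
    have hd2 : d^2 ≤ 0 := by nlinarith [h1, h2, h3, h4]
    have hd0 : d = 0 := by
      have : d^2 = 0 := le_antisymm hd2 (sq_nonneg d)
      exact pow_eq_zero_iff (by norm_num) |>.mp this
    linarith [hd0, hd]
  ext p q
  obtain ⟨i, j⟩ := p
  obtain ⟨k, l⟩ := q
  rw [Matrix.vecMulVec_apply]
  exact key i k j l
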